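/- Let v₁,…,vₙ be unit vectors in ℝ^d with ⟨vᵢ,vⱼ⟩ ≤ α for all i ≠ j, where 0 ≤ α < 1. Fix u = v₁ and let N⁻(u) = { i : ⟨u,vᵢ⟩ < 0 }. Then Σ_{i ∈ N⁻(u)} ⟨u,vᵢ⟩² ≤ 1 + α · (Σ_{i ∈ N⁻(u)} ⟨u,vᵢ⟩)². -/

import Mathlib

theorem neg_neighborhood_bound {n d : ℕ} (α : ℝ) (hα0 : 0 ≤ α) (hα1 : α < 1)
    (v : Fin (n + 1) → EuclideanSpace ℝ (Fin d))
    (hunit : ∀ i, ‖v i‖ = 1)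
    (hpair : ∀ i j, i ≠ j → (inner ℝ (v i) (v j) : ℝ) ≤ α) :
    ∑ i ∈ Finset.univ.filter (fun i => (inner ℝ (v 0) (v i) : ℝ) < 0),
        (inner ℝ (v 0) (v i) : ℝ) ^ 2
      ≤ 1 + α * (∑ i ∈ Finset.univ.filter (fun i => (inner ℝ (v 0) (v i) : ℝ) < 0),
          (inner ℝ (v 0) (v i) : ℝ)) ^ 2 := by
  classical
  set c : Fin (n+1) → ℝ := fun i => inner ℝ (v 0) (v i) with hc
  set N := Finset.univ.filter (fun i => (inner ℝ (v 0) (v i) : ℝ) < 0) with hN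
  have hmem : ∀ i ∈ N, c i < 0 := by
    intro i hi
    simpa [hN, hc] using Finset.mem_filter.mp hi
  set S := ∑ i ∈ N, c i ^ 2 with hS
  set T := ∑ i ∈ N, c i with hT
  show S ≤ 1 + α * T ^ 2
  have hSnn : 0 ≤ S := Finset.sum_nonneg fun i _ => sq_nonneg _
  have hself : ∀ i, (inner ℝ (v i) (v i) : ℝ) = 1 := by
    intro i
    rw [real_inner_self_eq_norm_sq, hunit]; norm_num
  set y := ∑ i ∈ N, c i • v i with hy
  have h2 : (inner ℝ (v 0) y : ℝ) = S := by
    rw [hy, inner_sum, hS]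
    refine Finset.sum_congr rfl fun i hi => ?_
    rw [real_inner_smul_right]
    have : (inner ℝ (v 0) (v i) : ℝ) = c i := rfl
    rw [this]; ring
  have h3 : (inner ℝ y y : ℝ) ≤ (1 - α) * S + α * T ^ 2 := by
    have expand : (inner ℝ y y : ℝ) = ∑ i ∈ N, ∑ j ∈ N, c i * c j * inner ℝ (v i) (v j) := by
      rw [hy, sum_inner]
      refine Finset.sum_congr rfl fun i hi => ?_
      rw [inner_sum]
      refine Finset.sum_congr rfl fun j hj => ?_
      rw [real_inner_smul_left, real_inner_smul_right]; ring
    rw [expand]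
    have step : ∑ i ∈ N, ∑ j ∈ N, c i * c j * inner ℝ (v i) (v j)
        ≤ ∑ i ∈ N, ∑ j ∈ N, (if i = j then c i ^ 2 else α * (c i * c j)) := by
      refine Finset.sum_le_sum fun i hi => Finset.sum_le_sum fun j hj => ?_
      by_cases hij : i = j
      · subst hij
        simp [hself i]
        ring_nf
        simp [sq, hunit i]
      · simp only [hij, if_false]
        have hcc : 0 < c i * c j := mul_pos_of_neg_of_neg (hmem i hi) (hmem j hj)
        calc c i * c j * inner ℝ (v i) (v j) ≤ c i * c j * α := by
              exact mul_le_mul_of_nonneg_left (hpair i j hij) hcc.le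
          _ = α * (c i * c j) := by ring
    refine step.trans_eq ?_
    have : ∀ i ∈ N, ∑ j ∈ N, (if i = j then c i ^ 2 else α * (c i * c j))
        = (1 - α) * c i ^ 2 + α * (c i * T) := by
      intro i hi
      have : ∀ j ∈ N, (if i = j then c i ^ 2 else α * (c i * c j))
          = α * (c i * c j) + (if i = j then (1 - α) * c i ^ 2 else 0) := by
        intro j hj
        by_cases hij : i = j
        · subst hij; simp; ring
        · simp [hij]
      rw [Finset.sum_congr rfl this, Finset.sum_add_distrib, Finset.sum_ite_eq N i, if_pos hi,
        ← Finset.mul_sum, hT, ← Finset.mul_sum]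
      ring
    rw [Finset.sum_congr rfl this, Finset.sum_add_distrib, ← Finset.mul_sum, ← hS,
      ← Finset.mul_sum, ← Finset.sum_mul, ← hT]
    ring
  have h0 : (0:ℝ) ≤ inner ℝ (v 0 - y) (v 0 - y) := real_inner_self_nonneg
  rw [inner_sub_sub_self] at h0
  rw [hself 0, real_inner_comm (v 0) y, h2] at h0
  have hαS : 0 ≤ α * S := mul_nonneg hα0 hSnn
  nlinarith [h3, h0]
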